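/- Let B and C be unital C*-algebras with C commutative, and let Ψ : B → C be a faithful central unital completely positive map that maps the closed unit ball of B onto the closed unit ball of C. Then the restriction of Ψ to its multiplicative domain Mult(Ψ) is a *-isomorphism from Mult(Ψ) onto C. -/

import Mathlib

/-- A linear map between C*-algebras is completely positive if for each `n` the induced
map on `n × n` matrices is positive (positivity of a matrix over a C*-algebra meaning
being of the form `star w * w`). -/
def IsCPMap {B C : Type*} [CStarAlgebra B] [CStarAlgebra C] (Ψ : B →L[ℂ] C) : Prop :=
  ∀ (n : ℕ) (v : Matrix (Fin n) (Fin n) B),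
    ∃ w : Matrix (Fin n) (Fin n) C, (star v * v).map Ψ = star w * w

/-- The multiplicative domain of a map `Ψ`. -/
def MultDomain {B C : Type*} [CStarAlgebra B] [CStarAlgebra C] (Ψ : B →L[ℂ] C) : Set B :=
  {v : B | Ψ (star v * v) = star (Ψ v) * Ψ v ∧ Ψ (v * star v) = Ψ v * star (Ψ v)}

namespace KR

open WeakDual Complex

variable {B C : Type*} [CStarAlgebra B] [CommCStarAlgebra C]

lemma sep {x y : C} (h : ∀ φ : characterSpace ℂ C, φ x = φ y) : x = y := by
  apply (gelfandTransform_bijective C).injective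
  ext φ
  simpa using h φ

lemma posA (Ψ : B →L[ℂ] C) (hcp : IsCPMap Ψ) (b : B) :
    ∃ y : C, Ψ (star b * b) = star y * y := by
  obtain ⟨w, hw⟩ := hcp 1 (Matrix.of fun _ _ => b)
  refine ⟨w 0 0, ?_⟩
  have := congrFun (congrFun hw 0) 0
  simpa [Matrix.mul_apply, Matrix.map_apply, Matrix.star_apply, Fin.sum_univ_one] using this

lemma fpos (Ψ : B →L[ℂ] C) (hcp : IsCPMap Ψ) (φ : characterSpace ℂ C) (b : B) :
    ∃ r : ℝ, 0 ≤ r ∧ φ (Ψ (star b * b)) = (r : ℂ) := by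
  obtain ⟨y, hy⟩ := posA Ψ hcp b
  refine ⟨Complex.normSq (φ y), Complex.normSq_nonneg _, ?_⟩
  rw [hy, map_mul, map_star]
  simp [Complex.normSq_eq_conj_mul_self]

lemma real (Ψ : B →L[ℂ] C) (hcp : IsCPMap Ψ) (φ : characterSpace ℂ C) (y : B) :
    starRingEnd ℂ (φ (Ψ (star y * y))) = φ (Ψ (star y * y)) := by
  obtain ⟨r, _, hr⟩ := fpos Ψ hcp φ y
  rw [hr, Complex.conj_ofReal]

lemma herm (Ψ : B →L[ℂ] C) (hunital : Ψ 1 = 1) (hcp : IsCPMap Ψ)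
    (φ : characterSpace ℂ C) (x : B) :
    φ (Ψ (star x)) = starRingEnd ℂ (φ (Ψ x)) := by
  have e1 : star (1 + x) * (1 + x) = 1 + x + star x + star x * x := by
    rw [star_add, star_one]; noncomm_ring
  have e2 : star (1 + Complex.I • x) * (1 + Complex.I • x)
      = 1 + Complex.I • x - Complex.I • star x + star x * x := by
    rw [star_add, star_one, star_smul]
    simp only [RCLike.star_def, Complex.conj_I, neg_smul]
    simp only [add_mul, mul_add, one_mul, mul_one, smul_mul_assoc, mul_smul_comm, smul_smul,
      neg_mul, Complex.I_mul_I, neg_neg, one_smul, neg_smul, smul_add, smul_sub]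
    match_scalars <;> simp [Complex.I_sq]
  have h1 := real Ψ hcp φ (1 + x)
  have h2 := real Ψ hcp φ (1 + Complex.I • x)
  rw [e1] at h1
  rw [e2] at h2
  have hx := real Ψ hcp φ x
  simp only [map_add, map_sub, map_smul, hunital, map_one, smul_eq_mul, map_mul,
    Complex.conj_I] at h1 h2
  have hB : starRingEnd ℂ (φ (Ψ (star x))) - starRingEnd ℂ (φ (Ψ x)) - φ (Ψ x)
      + φ (Ψ (star x)) = 0 := by
    linear_combination (-Complex.I) * (h2 - hx) +
      (starRingEnd ℂ (φ (Ψ (star x))) - starRingEnd ℂ (φ (Ψ x)) - φ (Ψ x) + φ (Ψ (star x))) *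
        Complex.I_mul_I
  linear_combination (hB - (h1 - hx)) / 2

lemma expand (Ψ : B →L[ℂ] C) (φ : characterSpace ℂ C) (l : ℂ) (a b : B) :
    φ (Ψ (star (l • a + b) * (l • a + b)))
      = starRingEnd ℂ l * l * φ (Ψ (star a * a)) + starRingEnd ℂ l * φ (Ψ (star a * b))
        + l * φ (Ψ (star b * a)) + φ (Ψ (star b * b)) := by
  have e : star (l • a + b) * (l • a + b)
      = (starRingEnd ℂ l * l) • (star a * a) + (starRingEnd ℂ l) • (star a * b)
        + l • (star b * a) + star b * b := by
    rw [star_add, star_smul]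
    simp only [RCLike.star_def, add_mul, mul_add, smul_mul_assoc, mul_smul_comm, smul_smul,
      smul_add]
    module
  rw [e]
  simp only [map_add, map_smul, smul_eq_mul]
  try ring

lemma deg (Ψ : B →L[ℂ] C) (hunital : Ψ 1 = 1) (hcp : IsCPMap Ψ)
    (φ : characterSpace ℂ C) (a : B) (ha : φ (Ψ (star a * a)) = 0) (b : B) :
    φ (Ψ (star a * b)) = 0 := by
  set t := φ (Ψ (star a * b)) with ht
  obtain ⟨q, hq0, hq⟩ := fpos Ψ hcp φ b
  have hba : φ (Ψ (star b * a)) = starRingEnd ℂ t := by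
    have : star b * a = star (star a * b) := by simp [star_mul]
    rw [this, herm Ψ hunital hcp φ]
  have key : ∀ s : ℝ, 0 ≤ q - 2 * s * Complex.normSq t := by
    intro s
    obtain ⟨r, hr0, hr⟩ := fpos Ψ hcp φ ((-(s : ℂ) * t) • a + b)
    have := expand Ψ φ (-(s : ℂ) * t) a b
    rw [hr, ha, hq, hba] at this
    have hre := congrArg Complex.re this
    simp [Complex.normSq_apply, Complex.mul_re, Complex.conj_re, Complex.conj_im] at hre ⊢
    nlinarith [hre, hr0]
  have hz : Complex.normSq t = 0 := by
    by_contra h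
    have hpos : 0 < Complex.normSq t := lt_of_le_of_ne (Complex.normSq_nonneg t) (Ne.symm h)
    have := key ((q + 1) / (2 * Complex.normSq t))
    have h2 : 2 * ((q + 1) / (2 * Complex.normSq t)) * Complex.normSq t = q + 1 := by
      field_simp
    rw [h2] at this
    linarith
  exact Complex.normSq_eq_zero.mp hz

lemma W (Ψ : B →L[ℂ] C) (hunital : Ψ 1 = 1) (hcp : IsCPMap Ψ)
    (φ : characterSpace ℂ C) (v : B)
    (hv : φ (Ψ (star v * v)) = starRingEnd ℂ (φ (Ψ v)) * φ (Ψ v)) (b : B) :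
    φ (Ψ (star v * b)) = starRingEnd ℂ (φ (Ψ v)) * φ (Ψ b) := by
  set c := φ (Ψ v) with hc
  have ha : φ (Ψ (star (v - c • 1) * (v - c • 1))) = 0 := by
    have e : star (v - c • 1) * (v - c • 1)
        = star v * v - c • star v - (starRingEnd ℂ c) • v + (starRingEnd ℂ c * c) • 1 := by
      rw [star_sub, star_smul]
      simp only [RCLike.star_def, star_one, sub_mul, mul_sub, smul_mul_assoc, mul_smul_comm,
        smul_smul, mul_one, one_mul]
      module
    rw [e]
    simp only [map_add, map_sub, map_smul, hunital, smul_eq_mul, mul_one]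
    rw [map_one, hv, herm Ψ hunital hcp φ v, ← hc]
    ring
  have hd := deg Ψ hunital hcp φ (v - c • 1) ha b
  have e2 : star (v - c • 1) * b = star v * b - (starRingEnd ℂ c) • b := by
    rw [star_sub, star_smul]
    simp only [RCLike.star_def, star_one, sub_mul, smul_mul_assoc, one_mul]
  rw [e2] at hd
  simp only [map_sub, map_smul, smul_eq_mul] at hd
  linear_combination hd

lemma multL (Ψ : B →L[ℂ] C) (hunital : Ψ 1 = 1) (hcp : IsCPMap Ψ)
    (φ : characterSpace ℂ C) {v : B} (hv : v ∈ MultDomain Ψ) (b : B) :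
    φ (Ψ (star v * b)) = starRingEnd ℂ (φ (Ψ v)) * φ (Ψ b) := by
  apply W Ψ hunital hcp φ v ?_ b
  rw [hv.1, map_mul, map_star]
  rfl

lemma multR (Ψ : B →L[ℂ] C) (hunital : Ψ 1 = 1) (hcp : IsCPMap Ψ)
    (φ : characterSpace ℂ C) {v : B} (hv : v ∈ MultDomain Ψ) (b : B) :
    φ (Ψ (v * b)) = φ (Ψ v) * φ (Ψ b) := by
  have h := W Ψ hunital hcp φ (star v) ?_ b
  · rw [star_star] at h
    rw [h, herm Ψ hunital hcp φ v]
    simp [Complex.conj_conj]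
  · rw [star_star, hv.2, map_mul, map_star, herm Ψ hunital hcp φ v]
    simp only [RCLike.star_def, Complex.conj_conj]
    try ring

lemma mult_zero (Ψ : B →L[ℂ] C) : (0 : B) ∈ MultDomain Ψ := by
  constructor <;> simp

lemma mult_smul (Ψ : B →L[ℂ] C) (z : ℂ) {v : B} (hv : v ∈ MultDomain Ψ) :
    z • v ∈ MultDomain Ψ := by
  constructor
  · have e : star (z • v) * (z • v) = (starRingEnd ℂ z * z) • (star v * v) := by
      rw [star_smul, RCLike.star_def, smul_mul_assoc, mul_smul_comm, smul_smul]
    rw [e, map_smul, hv.1, map_smul, star_smul, RCLike.star_def, smul_mul_assoc,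
      mul_smul_comm, smul_smul]
  · have e : (z • v) * star (z • v) = (z * starRingEnd ℂ z) • (v * star v) := by
      rw [star_smul, RCLike.star_def, smul_mul_assoc, mul_smul_comm, smul_smul]
    rw [e, map_smul, hv.2, map_smul, star_smul, RCLike.star_def, smul_mul_assoc,
      mul_smul_comm, smul_smul]

lemma mult_add (Ψ : B →L[ℂ] C) (hunital : Ψ 1 = 1) (hcp : IsCPMap Ψ) {v w : B}
    (hv : v ∈ MultDomain Ψ) (hw : w ∈ MultDomain Ψ) : v + w ∈ MultDomain Ψ := by
  have hv1 : ∀ φ : characterSpace ℂ C,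
      φ (Ψ (star v * v)) = starRingEnd ℂ (φ (Ψ v)) * φ (Ψ v) := fun φ => by
    rw [hv.1, map_mul, map_star]; rfl
  have hw1 : ∀ φ : characterSpace ℂ C,
      φ (Ψ (star w * w)) = starRingEnd ℂ (φ (Ψ w)) * φ (Ψ w) := fun φ => by
    rw [hw.1, map_mul, map_star]; rfl
  constructor
  · apply sep; intro φ
    have e : star (v + w) * (v + w) = star v * v + star v * w + star w * v + star w * w := by
      rw [star_add]; noncomm_ring
    rw [e]
    simp only [map_add]
    rw [multL Ψ hunital hcp φ hv w, multL Ψ hunital hcp φ hw v, hv1 φ, hw1 φ,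
      map_mul, map_star]
    simp only [RCLike.star_def, map_add]
    ring
  · apply sep; intro φ
    have e : (v + w) * star (v + w) = v * star v + v * star w + w * star v + w * star w := by
      rw [star_add]; noncomm_ring
    rw [e]
    simp only [map_add]
    rw [multR Ψ hunital hcp φ hv (star v), multR Ψ hunital hcp φ hv (star w),
      multR Ψ hunital hcp φ hw (star v), multR Ψ hunital hcp φ hw (star w),
      herm Ψ hunital hcp φ v, herm Ψ hunital hcp φ w,
      map_mul, map_star]
    simp only [RCLike.star_def, map_add]
    ring

lemma sch (Ψ : B →L[ℂ] C) (hunital : Ψ 1 = 1) (hcp : IsCPMap Ψ)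
    (φ : characterSpace ℂ C) (b : B) :
    ∃ r : ℝ, φ (Ψ (star b * b)) = (r : ℂ) ∧ Complex.normSq (φ (Ψ b)) ≤ r := by
  obtain ⟨q, hq0, hq⟩ := fpos Ψ hcp φ b
  refine ⟨q, hq, ?_⟩
  set t := φ (Ψ b) with ht
  obtain ⟨r, hr0, hr⟩ := fpos Ψ hcp φ (b - t • 1)
  have e : star (b - t • 1) * (b - t • 1)
      = star b * b - t • star b - (starRingEnd ℂ t) • b + (starRingEnd ℂ t * t) • 1 := by
    rw [star_sub, star_smul]
    simp only [RCLike.star_def, star_one, sub_mul, mul_sub, smul_mul_assoc, mul_smul_comm,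
      smul_smul, mul_one, one_mul]
    module
  rw [e] at hr
  simp only [map_add, map_sub, map_smul, smul_eq_mul, hunital] at hr
  rw [map_one φ, hq, herm Ψ hunital hcp φ b, ← ht] at hr
  have : (q : ℂ) - Complex.normSq t = r := by
    rw [← hr, Complex.normSq_eq_conj_mul_self]
    ring
  have hre := congrArg Complex.re this
  push_cast at hre
  simp at hre
  linarith

lemma sqrt_one_sub (b : B) (hb : ‖b‖ ≤ 1) : ∃ y : B, 1 - star b * b = star y * y := by
  letI := CStarAlgebra.spectralOrder B
  haveI := CStarAlgebra.spectralOrderedRing B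
  have hpos : (0 : B) ≤ 1 - star b * b := by
    have h1 : ‖star b * b‖ ≤ 1 := by
      rw [CStarRing.norm_star_mul_self]
      nlinarith [norm_nonneg b]
    have := (CStarAlgebra.norm_le_one_iff_of_nonneg (star b * b) (star_mul_self_nonneg b)).mp h1
    rwa [← sub_nonneg] at this
  refine ⟨CFC.sqrt (1 - star b * b), ?_⟩
  have hy0 : (0 : B) ≤ CFC.sqrt (1 - star b * b) := CFC.sqrt_nonneg _
  rw [(IsSelfAdjoint.of_nonneg hy0).star_eq, CFC.sqrt_mul_sqrt_self _ hpos]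

lemma le_one (Ψ : B →L[ℂ] C) (hunital : Ψ 1 = 1) (hcp : IsCPMap Ψ)
    (φ : characterSpace ℂ C) (b : B) (hb : ‖b‖ ≤ 1) :
    ∃ r : ℝ, φ (Ψ (star b * b)) = (r : ℂ) ∧ r ≤ 1 := by
  obtain ⟨y, hyy⟩ := sqrt_one_sub b hb
  obtain ⟨r', hr0', hr'⟩ := fpos Ψ hcp φ y
  rw [← hyy] at hr'
  simp only [map_sub, hunital] at hr'
  rw [map_one φ] at hr'
  obtain ⟨q, hq0, hq⟩ := fpos Ψ hcp φ b
  rw [hq] at hr'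
  refine ⟨q, hq, ?_⟩
  have : (1 : ℝ) - q = r' := by exact_mod_cast hr'
  linarith

lemma lift_unitary (Ψ : B →L[ℂ] C) (hunital : Ψ 1 = 1) (hcp : IsCPMap Ψ)
    (honto : ∀ c : C, ‖c‖ ≤ 1 → ∃ b : B, ‖b‖ ≤ 1 ∧ Ψ b = c)
    (u : C) (h1 : star u * u = 1) (h2 : u * star u = 1) :
    ∃ b ∈ MultDomain Ψ, Ψ b = u := by
  have hnorm : ‖u‖ ≤ 1 := by
    have hone : ‖(1 : C)‖ ≤ 1 := by
      have h := CStarRing.norm_star_mul_self (x := (1 : C))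
      rw [star_one, mul_one] at h
      nlinarith [norm_nonneg (1 : C)]
    have h := CStarRing.norm_star_mul_self (x := u)
    rw [h1] at h
    nlinarith [norm_nonneg u]
  obtain ⟨b, hb, hΨb⟩ := honto u hnorm
  have hu : ∀ φ : characterSpace ℂ C, starRingEnd ℂ (φ u) * φ u = 1 := fun φ => by
    have := congrArg φ h1
    rw [map_mul, map_star, map_one] at this
    rw [← this]; rfl
  refine ⟨b, ⟨?_, ?_⟩, hΨb⟩
  · apply sep; intro φ
    obtain ⟨r, hr, hle⟩ := sch Ψ hunital hcp φ b
    obtain ⟨r', hr', hle'⟩ := le_one Ψ hunital hcp φ b hb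
    have hrr : r = r' := by
      rw [hr] at hr'
      exact_mod_cast hr'
    rw [hΨb] at hle
    have hn : Complex.normSq (φ u) = 1 := by
      have h : (Complex.normSq (φ u) : ℂ) = 1 := by
        rw [Complex.normSq_eq_conj_mul_self]; exact hu φ
      exact_mod_cast h
    have h1' : (1 : ℝ) ≤ r := by
      rw [hn] at hle; linarith
    have hre : r = 1 := le_antisymm (hrr ▸ hle') h1'
    rw [hr, hre, map_mul, map_star, hΨb, RCLike.star_def, hu φ]
    norm_num
  · apply sep; intro φ
    have hb' : ‖star b‖ ≤ 1 := by rwa [norm_star]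
    obtain ⟨r, hr, hle⟩ := sch Ψ hunital hcp φ (star b)
    obtain ⟨r', hr', hle'⟩ := le_one Ψ hunital hcp φ (star b) hb'
    rw [star_star] at hr hr'
    have hrr : r = r' := by
      rw [hr] at hr'
      exact_mod_cast hr'
    rw [herm Ψ hunital hcp φ b, hΨb] at hle
    have hn : Complex.normSq (starRingEnd ℂ (φ u)) = 1 := by
      rw [Complex.normSq_conj]
      have h : (Complex.normSq (φ u) : ℂ) = 1 := by
        rw [Complex.normSq_eq_conj_mul_self]; exact hu φ
      exact_mod_cast h
    have h1' : (1 : ℝ) ≤ r := by rw [hn] at hle; linarith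
    have hre : r = 1 := le_antisymm (hrr ▸ hle') h1'
    rw [hr, hre, map_mul, map_star, hΨb, RCLike.star_def]
    push_cast
    linear_combination -hu φ
-- every selfadjoint contraction is the average of a unitary and its star
lemma exists_unitary (c : C) (hc : IsSelfAdjoint c) (hnorm : ‖c‖ ≤ 1) :
    ∃ u : C, star u * u = 1 ∧ u * star u = 1 ∧ c = (1/2 : ℂ) • (u + star u) := by
  letI := CStarAlgebra.spectralOrder C
  haveI := CStarAlgebra.spectralOrderedRing C
  have hcc : (0 : C) ≤ c * c := by
    simpa [hc.star_eq] using star_mul_self_nonneg c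
  have hle : c * c ≤ 1 := by
    refine (CStarAlgebra.norm_le_one_iff_of_nonneg (c * c) hcc).mp ?_
    calc ‖c * c‖ = ‖star c * c‖ := by rw [hc.star_eq]
    _ = ‖c‖ * ‖c‖ := CStarRing.norm_star_mul_self
    _ ≤ 1 := by nlinarith [norm_nonneg c]
  have hpos : (0 : C) ≤ 1 - c * c := by rwa [sub_nonneg]
  set s := CFC.sqrt (1 - c * c) with hs
  have hs0 : (0 : C) ≤ s := CFC.sqrt_nonneg _
  have hssa : star s = s := (IsSelfAdjoint.of_nonneg hs0).star_eq
  have hss : s * s = 1 - c * c := CFC.sqrt_mul_sqrt_self _ hpos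
  refine ⟨c + Complex.I • s, ?_, ?_, ?_⟩
  · have hstar : star (c + Complex.I • s) = c - Complex.I • s := by
      rw [star_add, star_smul, hssa, hc.star_eq, RCLike.star_def, Complex.conj_I, neg_smul,
        sub_eq_add_neg]
    rw [hstar]
    rw [Algebra.smul_def]
    set j := algebraMap ℂ C Complex.I with hj
    have hj2 : j * j = -1 := by
      rw [hj, ← map_mul, Complex.I_mul_I, map_neg, map_one]
    linear_combination (-(s * s)) * hj2 + hss
  · have hstar : star (c + Complex.I • s) = c - Complex.I • s := by
      rw [star_add, star_smul, hssa, hc.star_eq, RCLike.star_def, Complex.conj_I, neg_smul,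
        sub_eq_add_neg]
    rw [hstar]
    rw [Algebra.smul_def]
    set j := algebraMap ℂ C Complex.I with hj
    have hj2 : j * j = -1 := by
      rw [hj, ← map_mul, Complex.I_mul_I, map_neg, map_one]
    linear_combination (-(s * s)) * hj2 + hss
  · have hstar : star (c + Complex.I • s) = c - Complex.I • s := by
      rw [star_add, star_smul, hssa, hc.star_eq, RCLike.star_def, Complex.conj_I, neg_smul,
        sub_eq_add_neg]
    rw [hstar]
    module

end KR


/-- (Kirchberg–Rørdam, Lemma 6.2, second part).  Let `B, C` be unital C*-algebras with
`C` commutative, and let `Ψ : B → C` be a faithful central unital completely positive map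
mapping the closed unit ball of `B` onto the closed unit ball of `C`.  Then the
restriction of `Ψ` to its multiplicative domain is a *-isomorphism onto `C`:
it is multiplicative, star-preserving, injective on `MultDomain Ψ` and maps
`MultDomain Ψ` onto `C`. -/
theorem multDomain_iso_of_onto_unit_ball
    {B C : Type*} [CStarAlgebra B] [CommCStarAlgebra C]
    (Ψ : B →L[ℂ] C) (hunital : Ψ 1 = 1) (hcp : IsCPMap Ψ)
    (hfaithful : ∀ b : B, Ψ (star b * b) = 0 → b = 0)
    (hcentral : ∀ a b : B, Ψ (a * b) = Ψ (b * a))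
    (honto : ∀ c : C, ‖c‖ ≤ 1 → ∃ b : B, ‖b‖ ≤ 1 ∧ Ψ b = c) :
    (∀ v ∈ MultDomain Ψ, ∀ w ∈ MultDomain Ψ, Ψ (v * w) = Ψ v * Ψ w) ∧
    (∀ v ∈ MultDomain Ψ, Ψ (star v) = star (Ψ v)) ∧
    Set.InjOn Ψ (MultDomain Ψ) ∧
    Ψ '' (MultDomain Ψ) = Set.univ := by
  refine ⟨?_, ?_, ?_, ?_⟩
  · intro v hv w hw
    apply KR.sep; intro φ
    rw [KR.multR Ψ hunital hcp φ hv w, map_mul]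
  · intro v hv
    apply KR.sep; intro φ
    rw [KR.herm Ψ hunital hcp φ v, map_star, RCLike.star_def]
  · intro v hv w hw h
    have h0 : Ψ (star (v - w) * (v - w)) = 0 := by
      apply KR.sep; intro φ
      rw [map_zero]
      have e : star (v - w) * (v - w) = star v * v - star v * w - star w * v + star w * w := by
        rw [star_sub]; noncomm_ring
      rw [e]
      simp only [map_add, map_sub]
      have hφ : φ (Ψ v) = φ (Ψ w) := by rw [h]
      have hv1 : φ (Ψ (star v * v)) = starRingEnd ℂ (φ (Ψ v)) * φ (Ψ v) := by
        rw [hv.1, map_mul, map_star]; rfl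
      have hw1 : φ (Ψ (star w * w)) = starRingEnd ℂ (φ (Ψ w)) * φ (Ψ w) := by
        rw [hw.1, map_mul, map_star]; rfl
      rw [KR.multL Ψ hunital hcp φ hv w, KR.multL Ψ hunital hcp φ hw v, hv1, hw1, hφ]
      ring
    have := hfaithful _ h0
    exact sub_eq_zero.mp this
  · rw [Set.eq_univ_iff_forall]
    intro c
    rcases eq_or_ne c 0 with hc | hc
    · exact ⟨0, KR.mult_zero Ψ, by simp [hc]⟩
    · have hn : (0 : ℝ) < ‖c‖ := norm_pos_iff.mpr hc
      set d : C := ((‖c‖ : ℂ))⁻¹ • c with hd_def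
      have hdnorm : ‖d‖ = 1 := by
        rw [hd_def, norm_smul, norm_inv, Complex.norm_real, Real.norm_eq_abs,
          abs_of_pos hn, inv_mul_cancel₀ (ne_of_gt hn)]
      set x : C := (1/2 : ℂ) • (d + star d) with hx_def
      set y : C := (-(Complex.I)/2 : ℂ) • (d - star d) with hy_def
      have hx_sa : IsSelfAdjoint x := by
        rw [hx_def]
        unfold IsSelfAdjoint
        rw [star_smul, star_add, star_star, RCLike.star_def]
        have : starRingEnd ℂ (1/2 : ℂ) = 1/2 := by
          rw [map_div₀, map_one, Complex.conj_ofNat]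
        rw [this, add_comm]
      have hy_sa : IsSelfAdjoint y := by
        rw [hy_def]
        unfold IsSelfAdjoint
        rw [star_smul, star_sub, star_star, RCLike.star_def]
        have : starRingEnd ℂ (-(Complex.I)/2 : ℂ) = Complex.I/2 := by
          rw [map_div₀, map_neg, Complex.conj_I, neg_neg, Complex.conj_ofNat]
        rw [this]
        match_scalars <;> ring
      have hxnorm : ‖x‖ ≤ 1 := by
        rw [hx_def, norm_smul]
        have h1 : ‖d + star d‖ ≤ 2 := by
          calc ‖d + star d‖ ≤ ‖d‖ + ‖star d‖ := norm_add_le _ _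
          _ = 2 := by rw [norm_star, hdnorm]; norm_num
        have h2 : ‖(1/2 : ℂ)‖ = 1/2 := by norm_num
        rw [h2]; linarith
      have hynorm : ‖y‖ ≤ 1 := by
        rw [hy_def, norm_smul]
        have h1 : ‖d - star d‖ ≤ 2 := by
          calc ‖d - star d‖ ≤ ‖d‖ + ‖star d‖ := norm_sub_le _ _
          _ = 2 := by rw [norm_star, hdnorm]; norm_num
        have h2 : ‖(-(Complex.I)/2 : ℂ)‖ = 1/2 := by
          rw [norm_div, norm_neg, Complex.norm_I]
          norm_num
        rw [h2]; linarith
      obtain ⟨u1, hu11, hu12, hxu⟩ := KR.exists_unitary x hx_sa hxnorm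
      obtain ⟨u2, hu21, hu22, hyu⟩ := KR.exists_unitary y hy_sa hynorm
      obtain ⟨b1, hb1m, hb1⟩ := KR.lift_unitary Ψ hunital hcp honto u1 hu11 hu12
      obtain ⟨b2, hb2m, hb2⟩ := KR.lift_unitary Ψ hunital hcp honto (star u1)
        (by rwa [star_star]) (by rwa [star_star])
      obtain ⟨b3, hb3m, hb3⟩ := KR.lift_unitary Ψ hunital hcp honto u2 hu21 hu22
      obtain ⟨b4, hb4m, hb4⟩ := KR.lift_unitary Ψ hunital hcp honto (star u2)
        (by rwa [star_star]) (by rwa [star_star])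
      refine ⟨(‖c‖ : ℂ) • ((1/2 : ℂ) • (b1 + b2) + (Complex.I/2 : ℂ) • (b3 + b4)), ?_, ?_⟩
      · exact KR.mult_smul Ψ _ (KR.mult_add Ψ hunital hcp
          (KR.mult_smul Ψ _ (KR.mult_add Ψ hunital hcp hb1m hb2m))
          (KR.mult_smul Ψ _ (KR.mult_add Ψ hunital hcp hb3m hb4m)))
      · rw [map_smul, map_add, map_smul, map_smul, map_add, map_add, hb1, hb2, hb3, hb4]
        have h3 : (Complex.I/2 : ℂ) • (u2 + star u2) = Complex.I • y := by
          rw [hyu, smul_smul, smul_add, smul_add]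
          match_scalars <;> ring
        rw [← hxu, h3]
        have hxy : x + Complex.I • y = d := by
          rw [hx_def, hy_def]
          match_scalars
          · linear_combination (-((‖c‖:ℂ))⁻¹/2) * Complex.I_mul_I
          · linear_combination ((1:ℂ)/2) * Complex.I_mul_I
        rw [hxy, hd_def, smul_smul, mul_inv_cancel₀ (Complex.ofReal_ne_zero.mpr (ne_of_gt hn)),
          one_smul]
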